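/- Let N be a node-classifier message passing neural network with k layers, where layer i updates each node label by x_v^i = N_i(x_v^{i−1}, Σ_{v' ∈ Neigh(v)} x_{v'}^{i−1}) and the output is N(G, v) = N_r(x_v^k). Let G be a graph with node w, and let B be the tree-unraveling of G at w to depth k with root (w, w), labels L_B(v, p) = L(v). Then for all j ≤ k and all unraveling nodes (v, p) at depth k − i with i ≥ j, the layer-j label of (v, p) in B equals the layer-j label of v in G; in particular N(B, (w, w)) = N(G, w). -/

import Mathlib

/-- No immediate backtracking in a walk: `v_{j-1} ≠ v_{j+1}`. -/
def NoBacktrack {V : Type*} : List V → Prop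
  | a :: b :: c :: rest => a ≠ c ∧ NoBacktrack (b :: c :: rest)
  | _ => True

/-- A straight path from `w`: a nonempty walk starting at `w`, with consecutive
vertices adjacent and no immediate backtracking. -/
def IsStraight {V : Type*} (adj : V → V → Prop) (w : V) (p : List V) : Prop :=
  p.head? = some w ∧ p.Chain' adj ∧ NoBacktrack p

/-- Layer-`j` labels of the MPNN on the graph given by the neighbourhood
function `neigh` and labeling `L`:
`x_v^0 = L v`, `x_v^{j+1} = N_{j+1}(x_v^j, Σ_{u ∈ neigh v} x_u^j)`. -/
noncomputable def mpnnG {V : Type*} {n : ℕ}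
    (Ncomb : ℕ → (Fin n → ℝ) → (Fin n → ℝ) → (Fin n → ℝ))
    (neigh : V → Finset V) (L : V → Fin n → ℝ) : ℕ → V → Fin n → ℝ
  | 0 => L
  | j + 1 => fun v =>
      Ncomb (j + 1) (mpnnG Ncomb neigh L j v) (∑ u ∈ neigh v, mpnnG Ncomb neigh L j u)

/-- Children of an unraveling node `p` (a straight path of the graph from `w`,
of length at most `k`): extensions `p ++ [v]` with `v` adjacent to the last
vertex of `p`, without immediate backtracking, within depth `k`. -/
def childSet {V : Type*} [DecidableEq V] (neigh : V → Finset V) (w : V) (k : ℕ)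
    (p : List V) : Finset V :=
  if p.length ≤ k then (neigh (p.getLastD w)).filter (fun v => p.dropLast.getLast? ≠ some v)
  else ∅

/-- Layer-`j` labels of the MPNN on the tree-unraveling at `w` to depth `k`:
an unraveling node is a straight path `p` (representing `(v, p)` with `v` its
last vertex); its label is `L v`, and its neighbours are its parent
`p.dropLast` (if any) and its children. -/
noncomputable def mpnnB {V : Type*} [DecidableEq V] {n : ℕ}
    (Ncomb : ℕ → (Fin n → ℝ) → (Fin n → ℝ) → (Fin n → ℝ))
    (neigh : V → Finset V) (L : V → Fin n → ℝ) (w : V) (k : ℕ) :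
    ℕ → List V → Fin n → ℝ
  | 0, p => L (p.getLastD w)
  | j + 1, p =>
      Ncomb (j + 1) (mpnnB Ncomb neigh L w k j p)
        ((if 2 ≤ p.length then mpnnB Ncomb neigh L w k j p.dropLast else 0) +
          ∑ v ∈ childSet neigh w k p, mpnnB Ncomb neigh L w k j (p ++ [v]))

/-- For a node-classifier MPNN with `k` layers, the layer-`j` label of any
unraveling node `(v, p)` of depth `≤ k - j` equals the layer-`j` label of `v`
in the original graph; in particular the MPNN output at the root of the
tree-unraveling equals the output at `w` in the graph. -/
theorem nb_dropLast {V : Type*} : ∀ (p : List V), NoBacktrack p → NoBacktrack p.dropLast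
  | [], _ => trivial
  | [_], _ => trivial
  | [_, _], _ => trivial
  | [_, _, _], _ => trivial
  | _::b::c::d::rest, h => ⟨h.1, nb_dropLast (b::c::d::rest) h.2⟩

theorem nb_append {V : Type*} : ∀ (p : List V) (x : V), NoBacktrack p →
    p.dropLast.getLast? ≠ some x → NoBacktrack (p ++ [x])
  | [], x, _, _ => trivial
  | [_], x, _, _ => trivial
  | [a, b], x, _, h2 => ⟨by simpa using h2, trivial⟩
  | a::b::c::rest, x, h, h2 => by
      refine ⟨h.1, nb_append (b::c::rest) x h.2 ?_⟩
      simpa [List.dropLast, List.getLast?_cons] using h2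


theorem unraveling_preserves_mpnn {V : Type*} [DecidableEq V] {n q : ℕ}
    (neigh : V → Finset V) (hsym : ∀ u v, u ∈ neigh v ↔ v ∈ neigh u)
    (L : V → Fin n → ℝ)
    (Ncomb : ℕ → (Fin n → ℝ) → (Fin n → ℝ) → (Fin n → ℝ))
    (Nr : (Fin n → ℝ) → Fin q → ℝ) (k : ℕ) (w : V) :
    (∀ j (p : List V), IsStraight (fun a b => b ∈ neigh a) w p →
        p.length + j ≤ k + 1 →
        mpnnB Ncomb neigh L w k j p = mpnnG Ncomb neigh L j (p.getLastD w)) ∧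
    Nr (mpnnB Ncomb neigh L w k k [w]) = Nr (mpnnG Ncomb neigh L k w) := by
  have main : ∀ j (p : List V), IsStraight (fun a b => b ∈ neigh a) w p →
      p.length + j ≤ k + 1 →
      mpnnB Ncomb neigh L w k j p = mpnnG Ncomb neigh L j (p.getLastD w) := by
    intro j
    induction j with
    | zero => intro p _ _; rfl
    | succ j ih =>
      intro p hstr hlen
      obtain ⟨hh, hc, hnb⟩ := hstr
      have hpne : p ≠ [] := by intro h; simp [h] at hh
      set v := p.getLastD w with hv
      have hplk : p.length ≤ k := by omega
      have hlast : p.getLast? = some v := by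
        rw [hv, List.getLastD_eq_getLast?, List.getLast?_eq_getLast hpne]
        simp
      -- children
      have hchild : childSet neigh w k p = (neigh v).filter
          (fun x => p.dropLast.getLast? ≠ some x) := by
        rw [childSet, if_pos hplk]
      have hchildsum : ∀ x ∈ childSet neigh w k p,
          mpnnB Ncomb neigh L w k j (p ++ [x]) = mpnnG Ncomb neigh L j x := by
        intro x hx
        rw [hchild, Finset.mem_filter] at hx
        have hstr' : IsStraight (fun a b => b ∈ neigh a) w (p ++ [x]) := by
          refine ⟨?_, ?_, nb_append p x hnb hx.2⟩
          · cases p with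
            | nil => exact absurd rfl hpne
            | cons a t => simpa using hh
          · change List.IsChain _ _; rw [List.isChain_append]
            refine ⟨hc, List.isChain_singleton _, ?_⟩
            intro y hy z hz
            simp at hz
            rw [hlast] at hy
            simp at hy
            subst hy; subst hz
            exact hx.1
        have := ih (p ++ [x]) hstr' (by simp; omega)
        simpa using this
      show Ncomb (j+1) _ _ = Ncomb (j+1) _ _
      have h1 : mpnnB Ncomb neigh L w k j p = mpnnG Ncomb neigh L j v :=
        ih p ⟨hh, hc, hnb⟩ (by omega)
      rw [h1]
      rw [Finset.sum_congr rfl hchildsum]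
      by_cases h2 : 2 ≤ p.length
      · -- parent exists
        have hqne : p.dropLast ≠ [] := by
          intro h
          have := congrArg List.length h
          simp at this; omega
        set u := p.dropLast.getLastD w with hu
        have hqlast : p.dropLast.getLast? = some u := by
          rw [hu, List.getLastD_eq_getLast?, List.getLast?_eq_getLast hqne]
          simp
        have hqstr : IsStraight (fun a b => b ∈ neigh a) w p.dropLast := by
          refine ⟨?_, hc.prefix (List.dropLast_prefix p), nb_dropLast p hnb⟩
          cases p with
          | nil => exact absurd rfl hpne
          | cons a t =>
            cases t with
            | nil => simp at h2
            | cons b s => simpa [List.dropLast] using hh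
        have hparent : mpnnB Ncomb neigh L w k j p.dropLast = mpnnG Ncomb neigh L j u := by
          have := ih p.dropLast hqstr (by
            have : p.dropLast.length = p.length - 1 := List.length_dropLast
            omega)
          rwa [← hu] at this
        have huv : u ∈ neigh v := by
          -- adjacency between last two vertices
          have hdec : p.dropLast ++ [p.getLast hpne] = p := List.dropLast_concat_getLast hpne
          have hc2 : (p.dropLast ++ [p.getLast hpne]).Chain' (fun a b => b ∈ neigh a) := by
            rw [hdec]; exact hc
          change List.IsChain _ _ at hc2; rw [List.isChain_append] at hc2
          have := hc2.2.2 u (by rw [hqlast]; rfl) (p.getLast hpne) (by simp)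
          have hgl : p.getLast hpne = v := by
            have := List.getLast?_eq_getLast hpne
            rw [hlast] at this
            exact (Option.some_inj.mp this).symm
          rw [hgl] at this
          exact (hsym u v).mpr this
        rw [if_pos h2, hparent]
        have hfilter : (neigh v).filter (fun x => p.dropLast.getLast? ≠ some x)
            = (neigh v).erase u := by
          rw [hqlast]
          ext x
          simp [Finset.mem_filter, Finset.mem_erase, ne_comm, and_comm]
        rw [hchild, hfilter]
        rw [← Finset.add_sum_erase _ _ huv]
      · -- p = [w]
        have hlen1 : p.length = 1 := by
          have := List.length_pos_iff.mpr hpne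
          omega
        obtain ⟨a, ha⟩ : ∃ a, p = [a] := by
          cases p with
          | nil => exact absurd rfl hpne
          | cons a t =>
            cases t with
            | nil => exact ⟨a, rfl⟩
            | cons b s => simp at hlen1
        rw [if_neg h2, hchild]
        subst ha
        simp [List.dropLast]
  refine ⟨main, ?_⟩
  have := main k [w] ⟨rfl, List.isChain_singleton _, trivial⟩ (by simp only [List.length_cons, List.length_nil]; omega)
  simp at this
  rw [this]
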